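/- Let (S_t)_{t≥s} satisfy S_t = S_{t-1}·(1 + γ²/(2·ln²(S_{t-1}))) for t ≥ s+1 with S_s > 1 and γ > 0. Then for all t ≥ s, ln³(S_t) ≤ ln³(S_s) + C₂·(t - s), where C₂ = 3γ²/2 + 3γ⁴/(4 ln³(S_s)) + γ⁶/(8 ln⁶(S_s)). -/

import Mathlib

/-- Upper bound for the recursion `S_{t+1} = S_t (1 + γ²/(2 ln² S_t))` with `S_s > 1`:
for all `t ≥ s`, `ln³(S_t) ≤ ln³(S_s) + C₂ (t - s)`, where
`C₂ = 3γ²/2 + 3γ⁴/(4 ln³ S_s) + γ⁶/(8 ln⁶ S_s)`. -/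
theorem stmt_8 (S : ℕ → ℝ) (s : ℕ) (γ : ℝ) (hγ : 0 < γ) (hSs : 1 < S s)
    (hrec : ∀ t, s ≤ t → S (t + 1) = S t * (1 + γ ^ 2 / (2 * (Real.log (S t)) ^ 2))) :
    ∀ t, s ≤ t →
      (Real.log (S t)) ^ 3
        ≤ (Real.log (S s)) ^ 3 +
            (3 * γ ^ 2 / 2 + 3 * γ ^ 4 / (4 * (Real.log (S s)) ^ 3)
              + γ ^ 6 / (8 * (Real.log (S s)) ^ 6)) * ((t : ℝ) - s) := by
  set L := Real.log (S s) with hLdef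
  have hL : 0 < L := Real.log_pos hSs
  -- monotonicity
  have hmono : ∀ t, s ≤ t → S s ≤ S t := by
    intro t ht
    induction t, ht using Nat.le_induction with
    | base => exact le_rfl
    | succ n hn ih =>
        rw [hrec n hn]
        have h1 : (0:ℝ) ≤ γ ^ 2 / (2 * (Real.log (S n)) ^ 2) := by positivity
        nlinarith [hSs.le.trans ih]
  intro t ht
  induction t, ht using Nat.le_induction with
  | base => simp [hLdef]
  | succ n hn ih =>
      have hSn : 1 < S n := lt_of_lt_of_le hSs (hmono n hn)
      have hx : L ≤ Real.log (S n) := Real.log_le_log (by linarith) (hmono n hn)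
      set x := Real.log (S n) with hxdef
      have hxpos : 0 < x := lt_of_lt_of_le hL hx
      set ε := γ ^ 2 / (2 * x ^ 2) with hεdef
      have hεpos : 0 < ε := by positivity
      -- log of the recursion
      have hlog : Real.log (S (n + 1)) = x + Real.log (1 + ε) := by
        rw [hrec n hn, Real.log_mul (by linarith) (by linarith)]
      have hle : Real.log (S (n + 1)) ≤ x + ε := by
        have := Real.log_le_sub_one_of_pos (show (0:ℝ) < 1 + ε by linarith)
        rw [hlog]; linarith
      have hpos1 : 0 < Real.log (S (n + 1)) := by
        rw [hlog]
        have : 0 ≤ Real.log (1 + ε) := Real.log_nonneg (by linarith)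
        linarith
      have hcube : (Real.log (S (n + 1))) ^ 3 ≤ (x + ε) ^ 3 :=
        pow_le_pow_left₀ hpos1.le hle 3
      have hexpand : (x + ε) ^ 3 =
          x ^ 3 + 3 * γ ^ 2 / 2 + 3 * γ ^ 4 / (4 * x ^ 3) + γ ^ 6 / (8 * x ^ 6) := by
        rw [hεdef]
        field_simp
        ring
      have h2 : 3 * γ ^ 4 / (4 * x ^ 3) ≤ 3 * γ ^ 4 / (4 * L ^ 3) := by
        gcongr
      have h3 : γ ^ 6 / (8 * x ^ 6) ≤ γ ^ 6 / (8 * L ^ 6) := by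
        gcongr
      have hcast : ((n + 1 : ℕ) : ℝ) - s = ((n : ℝ) - s) + 1 := by push_cast; ring
      rw [hcast]
      calc (Real.log (S (n + 1))) ^ 3
          ≤ x ^ 3 + 3 * γ ^ 2 / 2 + 3 * γ ^ 4 / (4 * x ^ 3) + γ ^ 6 / (8 * x ^ 6) := by
            rw [← hexpand]; exact hcube
        _ ≤ x ^ 3 + (3 * γ ^ 2 / 2 + 3 * γ ^ 4 / (4 * L ^ 3) + γ ^ 6 / (8 * L ^ 6)) := by
            linarith
        _ ≤ L ^ 3 + (3 * γ ^ 2 / 2 + 3 * γ ^ 4 / (4 * L ^ 3) + γ ^ 6 / (8 * L ^ 6)) * ((n:ℝ) - s)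
              + (3 * γ ^ 2 / 2 + 3 * γ ^ 4 / (4 * L ^ 3) + γ ^ 6 / (8 * L ^ 6)) := by
            linarith
        _ = L ^ 3 + (3 * γ ^ 2 / 2 + 3 * γ ^ 4 / (4 * L ^ 3) + γ ^ 6 / (8 * L ^ 6))
              * (((n:ℝ) - s) + 1) := by ring
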